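/- For every positive integer l and every piecewise syndetic set A ⊆ ℕ, there exist positive integers a, b, c such that a + b·k + c·k² ∈ A for all k = 1, ..., l. -/

import Mathlib

open Combinatorics Finset

/-- Bounded van der Waerden over `ℕ`, derived from the Hales–Jewett theorem:
there is a bound `N` (independent of the coloring) such that every coloring of `ℕ`
admits a monochromatic homothetic copy of `S` lying within `[0, N]`. -/
lemma bounded_vdw (S : Finset ℕ) (κ : Type) [Finite κ] :
    ∃ N : ℕ, ∀ C : ℕ → κ, ∃ a > 0, ∃ (b : ℕ) (c : κ),
      (∀ s ∈ S, a * s + b ≤ N) ∧ ∀ s ∈ S, C (a * s + b) = c := by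
  classical
  obtain ⟨ι, _inst, hι⟩ := Line.exists_mono_in_high_dimension S κ
  refine ⟨Fintype.card ι * S.sup id, fun C => ?_⟩
  obtain ⟨l, c, hl⟩ := hι fun v => C <| ∑ i, (v i : ℕ)
  set s : Finset ι := Finset.univ.filter (fun i => l.idxFun i = none) with hs
  have key : ∀ x (xs : x ∈ S),
      (∑ i, ((l ⟨x, xs⟩) i : ℕ)) = s.card * x + ∑ i ∈ sᶜ, ((l.idxFun i).map (fun m : S => (m : ℕ))).getD 0 := by
    intro x xs
    rw [← Finset.sum_add_sum_compl s]
    congr 1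
    · rw [Finset.sum_congr rfl (fun i hi => ?_), Finset.sum_const, smul_eq_mul]
      rw [hs, Finset.mem_filter] at hi
      rw [l.apply_none _ _ hi.right]
    · apply Finset.sum_congr rfl
      intro i hi
      rw [hs, Finset.compl_filter, Finset.mem_filter] at hi
      obtain ⟨y, hy⟩ := Option.ne_none_iff_exists.mp hi.right
      simp_rw [← hy, Option.map_some, Option.getD]
      rw [l.apply_some hy.symm]
  refine ⟨s.card, Finset.card_pos.mpr ⟨l.proper.choose, ?_⟩,
    ∑ i ∈ sᶜ, ((l.idxFun i).map (fun m : S => (m : ℕ))).getD 0, c, ?_, ?_⟩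
  · rw [hs, Finset.mem_filter]
    exact ⟨Finset.mem_univ _, l.proper.choose_spec⟩
  · intro x xs
    rw [← key x xs]
    calc (∑ i, ((l ⟨x, xs⟩) i : ℕ)) ≤ ∑ _i : ι, S.sup id := by
          apply Finset.sum_le_sum
          intro i _
          exact Finset.le_sup (f := id) ((l ⟨x, xs⟩) i).2
      _ = Fintype.card ι * S.sup id := by
          rw [Finset.sum_const, smul_eq_mul, Finset.card_univ]
  · intro x xs
    rw [← hl ⟨x, xs⟩]
    congr 1
    exact (key x xs).symm

/-- `A ⊆ ℕ` is piecewise syndetic: a finite union of translates `A - t`, `t ∈ F`,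
contains arbitrarily long intervals. -/
def PiecewiseSyndetic (A : Set ℕ) : Prop :=
  ∃ F : Finset ℕ, ∀ L : ℕ, ∃ a : ℕ, ∀ i < L, ∃ t ∈ F, a + i + t ∈ A

/-- Degree-2 case: every piecewise syndetic set contains `a + b k + c k²` for
`k = 1, ..., l` with `a, b, c` positive. -/
theorem stmt_15 (l : ℕ) (hl : 0 < l) (A : Set ℕ) (hA : PiecewiseSyndetic A) :
    ∃ a b c : ℕ, 0 < a ∧ 0 < b ∧ 0 < c ∧
      ∀ k, 1 ≤ k → k ≤ l → a + b * k + c * k ^ 2 ∈ A := by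
  obtain ⟨F, hF⟩ := hA
  -- F is nonempty
  obtain ⟨p₀, hp₀⟩ := hF 1
  obtain ⟨t₀, ht₀, -⟩ := hp₀ 0 (by norm_num)
  -- set up the bounded vdW for the quadratic pattern
  set S : Finset ℕ := (Finset.range (l + 1)).image (fun k => k ^ 2 + 3 * k + 2) with hS
  obtain ⟨N, hN⟩ := bounded_vdw S {t // t ∈ F}
  obtain ⟨p, hp⟩ := hF (N + 1)
  -- the coloring of the interval [p, p + N]
  have hc : ∀ i, ∃ t : {t // t ∈ F}, i ≤ N → p + i + (t : ℕ) ∈ A := by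
    intro i
    by_cases h : i ≤ N
    · obtain ⟨t, ht, hmem⟩ := hp i (by omega)
      exact ⟨⟨t, ht⟩, fun _ => hmem⟩
    · exact ⟨⟨t₀, ht₀⟩, fun h' => absurd h' h⟩
  choose C hC using hc
  obtain ⟨a, ha, b, c, hbd, hmono⟩ := hN C
  refine ⟨p + b + (c : ℕ) + 2 * a, 3 * a, a, by positivity, by positivity, ha, ?_⟩
  intro k hk1 hkl
  have hkS : k ^ 2 + 3 * k + 2 ∈ S := by
    rw [hS]
    exact Finset.mem_image.mpr ⟨k, Finset.mem_range.mpr (by omega), rfl⟩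
  have hmem : p + (a * (k ^ 2 + 3 * k + 2) + b) + (c : ℕ) ∈ A := by
    have h1 := hC (a * (k ^ 2 + 3 * k + 2) + b) (hbd _ hkS)
    rwa [hmono _ hkS] at h1
  have he : p + (a * (k ^ 2 + 3 * k + 2) + b) + (c : ℕ)
      = p + b + (c : ℕ) + 2 * a + 3 * a * k + a * k ^ 2 := by ring
  rwa [he] at hmem
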